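/- Let C be a triangulated category and let (T, F) be a t-structure in C. Then (Defl T, Defl F) is a deflation factorization system in C. -/

import Mathlib

open CategoryTheory CategoryTheory.Limits CategoryTheory.Pretriangulated

namespace TriangFS

variable {C : Type*} [Category C] [Preadditive C] [HasZeroObject C]
  [HasShift C ℤ] [∀ n : ℤ, (shiftFunctor C n).Additive]
  [Pretriangulated C] [IsTriangulated C]

/-- `K` is a cocone of `f : X ⟶ Y` if it fits in a distinguished triangle
`K ⟶ X ⟶ Y ⟶ K⟦1⟧`. -/
def IsCoconeOf {X Y : C} (f : X ⟶ Y) (K : C) : Prop :=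
  ∃ (g : K ⟶ X) (h : Y ⟶ K⟦(1 : ℤ)⟧), Triangle.mk g f h ∈ distTriang C

/-- `l ⊥ r` iff `Hom(K_l, K_r) = 0` and `Hom(K_l, K_r⟦-1⟧) = 0` for cocones
`K_l` of `l` and `K_r` of `r`. -/
def CoconePerp {X Y Z W : C} (l : X ⟶ Y) (r : Z ⟶ W) : Prop :=
  ∀ (Kl Kr : C), IsCoconeOf l Kl → IsCoconeOf r Kr →
    (∀ φ : Kl ⟶ Kr, φ = 0) ∧ (∀ φ : Kl ⟶ Kr⟦(-1 : ℤ)⟧, φ = 0)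

/-- `Defl U`: morphisms admitting a cocone in `U`. -/
def Defl (U : Set C) : MorphismProperty C :=
  fun _ _ f => ∃ K ∈ U, IsCoconeOf f K

/-- `Cocone L`: objects isomorphic to a cocone of some morphism in `L`. -/
def CoconeClass (L : MorphismProperty C) : Set C :=
  {K | ∃ (X Y : C) (f : X ⟶ Y), L f ∧ IsCoconeOf f K}

/-- A `t`-structure `(U, V)` in a triangulated category. -/
structure IsTStructure (U V : Set C) : Prop where
  isoClosed_left : ∀ {X Y : C}, (X ≅ Y) → X ∈ U → Y ∈ U
  isoClosed_right : ∀ {X Y : C}, (X ≅ Y) → X ∈ V → Y ∈ V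
  exists_triangle : ∀ X : C, ∃ (U' V' : C) (_ : U' ∈ U) (_ : V' ∈ V)
      (f : U' ⟶ X) (g : X ⟶ V') (h : V' ⟶ U'⟦(1 : ℤ)⟧),
      Triangle.mk f g h ∈ distTriang C
  hom_zero : ∀ {X Y : C}, X ∈ U → Y ∈ V → ∀ f : X ⟶ Y, f = 0
  shift_mem : ∀ {X : C}, X ∈ U → X⟦(1 : ℤ)⟧ ∈ U

/-- A deflation factorization system `(L, R)` in a triangulated category. -/
structure IsDeflFactorizationSystem (L R : MorphismProperty C) : Prop where
  factor : ∀ {X Y : C} (f : X ⟶ Y),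
    ∃ (K : C) (l : X ⟶ K) (r : K ⟶ Y), L l ∧ R r ∧ l ≫ r = f
  left_eq : ∀ {X Y : C} (f : X ⟶ Y),
    L f ↔ ∀ {Z W : C} (g : Z ⟶ W), R g → CoconePerp f g
  right_eq : ∀ {Z W : C} (g : Z ⟶ W),
    R g ↔ ∀ {X Y : C} (f : X ⟶ Y), L f → CoconePerp f g

open ZeroObject

section Aux

variable {C : Type*} [Category C] [Preadditive C] [HasZeroObject C]
  [HasShift C ℤ] [∀ n : ℤ, (shiftFunctor C n).Additive]
  [Pretriangulated C]

/-- Hom vanishing into the `(-1)`-shift of an object of `F`. -/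
lemma hom_shift_zero {T F : Set C} (h : IsTStructure T F) {K K' : C}
    (hK : K ∈ T) (hK' : K' ∈ F) (φ : K ⟶ K'⟦(-1 : ℤ)⟧) : φ = 0 := by
  apply (shiftFunctor C (1 : ℤ)).map_injective
  have h2 : (shiftFunctor C (1 : ℤ)).map φ =
      ((shiftFunctor C (1 : ℤ)).map φ ≫
        (shiftFunctorCompIsoId C (-1 : ℤ) (1 : ℤ) (by omega)).hom.app K') ≫
        (shiftFunctorCompIsoId C (-1 : ℤ) (1 : ℤ) (by omega)).inv.app K' := by simp
  have h0 := h.hom_zero (h.shift_mem hK) hK' ((shiftFunctor C (1 : ℤ)).map φ ≫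
    (shiftFunctorCompIsoId C (-1 : ℤ) (1 : ℤ) (by omega)).hom.app K')
  rw [Functor.map_zero, h2, h0, zero_comp]

/-- Any two cocones of a morphism are isomorphic. -/
lemma isCoconeOf_nonempty_iso {X Y : C} (f : X ⟶ Y) {K K' : C}
    (hK : IsCoconeOf f K) (hK' : IsCoconeOf f K') : Nonempty (K ≅ K') := by
  obtain ⟨g, h1, mem⟩ := hK
  obtain ⟨g', h1', mem'⟩ := hK'
  obtain ⟨a, ha₁, ha₂⟩ := complete_distinguished_triangle_morphism₁ _ _ mem mem'
    (𝟙 X) (𝟙 Y) (by exact (Category.comp_id f).trans (Category.id_comp f).symm)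
  let φ : Triangle.mk g f h1 ⟶ Triangle.mk g' f h1' :=
    { hom₁ := a
      hom₂ := 𝟙 X
      hom₃ := 𝟙 Y
      comm₁ := ha₁
      comm₂ := by exact (Category.comp_id f).trans (Category.id_comp f).symm
      comm₃ := ha₂ }
  have : IsIso φ.hom₁ := isIso₁_of_isIso₂₃ φ mem mem'
    (by exact IsIso.id X) (by exact IsIso.id Y)
  exact ⟨@asIso _ _ _ _ φ.hom₁ this⟩

/-- `CoconePerp` follows from having cocones in `T` and `F` respectively. -/
lemma coconePerp_of_mem {T F : Set C} (h : IsTStructure T F)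
    {X Y Z W : C} {l : X ⟶ Y} {r : Z ⟶ W} {K K' : C}
    (hKT : K ∈ T) (hK'F : K' ∈ F) (hK : IsCoconeOf l K) (hK' : IsCoconeOf r K') :
    CoconePerp l r := by
  intro Kl Kr hKl hKr
  obtain ⟨i⟩ := isCoconeOf_nonempty_iso l hKl hK
  obtain ⟨j⟩ := isCoconeOf_nonempty_iso r hKr hK'
  constructor
  · intro φ
    have h0 := h.hom_zero hKT hK'F (i.inv ≫ φ ≫ j.hom)
    rw [← cancel_epi i.inv, ← cancel_mono j.hom]
    simpa using h0
  · intro φ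
    have h0 := hom_shift_zero h hKT hK'F
      (i.inv ≫ φ ≫ ((shiftFunctor C (-1 : ℤ)).mapIso j).hom)
    rw [← cancel_epi i.inv, ← cancel_mono ((shiftFunctor C (-1 : ℤ)).mapIso j).hom]
    simpa using h0

/-- A zero morphism to `V⟦1⟧` has `V` as a cocone. -/
lemma isCoconeOf_zero (V : C) : IsCoconeOf (0 : (0 : C) ⟶ V⟦(1 : ℤ)⟧) V :=
  ⟨0, 𝟙 _, contractible_distinguished₂ V⟩

end Aux

/-- if `(T, F)` is a `t`-structure in a triangulated category `C`,
then `(Defl T, Defl F)` is a deflation factorization system in `C`. -/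


theorem tStructure_defl_isDeflFactorizationSystem
    (T F : Set C) (h : IsTStructure T F) :
    IsDeflFactorizationSystem (Defl T) (Defl F) := by
  constructor
  · -- factorization via the octahedron axiom
    intro X Y f
    obtain ⟨K, k, h₂, hT₂₃⟩ := distinguished_cocone_triangle₁ f
    obtain ⟨U, V, hU, hV, u, p, w, hT₁₂⟩ := h.exists_triangle K
    obtain ⟨M, q, w', hT₁₃⟩ := distinguished_cocone_triangle (u ≫ k)
    let O := Triangulated.someOctahedron rfl hT₁₂ hT₂₃ hT₁₃
    exact ⟨M, q, O.m₃, ⟨U, hU, ⟨u ≫ k, w', hT₁₃⟩⟩,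
      ⟨V, hV, ⟨O.m₁, h₂ ≫ p⟦(1 : ℤ)⟧', O.mem⟩⟩, O.comm₃⟩
  · intro X Y f
    constructor
    · rintro ⟨K, hKT, hK⟩ Z W g ⟨K', hK'F, hK'⟩
      exact coconePerp_of_mem h hKT hK'F hK hK'
    · intro H
      obtain ⟨K, k, h₂, hT⟩ := distinguished_cocone_triangle₁ f
      have hK : IsCoconeOf f K := ⟨k, h₂, hT⟩
      obtain ⟨U, V, hU, hV, u, p, w, hUV⟩ := h.exists_triangle K
      have hg : Defl F (0 : (0 : C) ⟶ V⟦(1 : ℤ)⟧) := ⟨V, hV, isCoconeOf_zero V⟩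
      obtain ⟨hz, -⟩ := H _ hg K V hK (isCoconeOf_zero V)
      have hp : p = 0 := hz p
      obtain ⟨ψ, hψ⟩ := Triangle.yoneda_exact₂ _ (rot_of_distTriang _ hUV) (𝟙 V)
        (by change p ≫ 𝟙 V = 0; rw [hp, zero_comp])
      have hVzero : IsZero V := by
        rw [IsZero.iff_id_eq_zero, hψ, h.hom_zero (h.shift_mem hU) hV ψ]; exact comp_zero
      have : IsIso u := (Triangle.isZero₃_iff_isIso₁ _ hUV).1 hVzero
      exact ⟨K, h.isoClosed_left (asIso u) hU, hK⟩
  · intro Z W g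
    constructor
    · rintro ⟨K', hK'F, hK'⟩ X Y f ⟨K, hKT, hK⟩
      exact coconePerp_of_mem h hKT hK'F hK hK'
    · intro H
      obtain ⟨K, k, h₂, hT⟩ := distinguished_cocone_triangle₁ g
      have hK : IsCoconeOf g K := ⟨k, h₂, hT⟩
      obtain ⟨U, V, hU, hV, u, p, w, hUV⟩ := h.exists_triangle K
      have hf : Defl T (0 : (0 : C) ⟶ U⟦(1 : ℤ)⟧) := ⟨U, hU, isCoconeOf_zero U⟩
      obtain ⟨hz, -⟩ := H _ hf U K (isCoconeOf_zero U) hK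
      have hu : u = 0 := hz u
      obtain ⟨ψ, hψ⟩ := Triangle.coyoneda_exact₂ _ (inv_rot_of_distTriang _ hUV) (𝟙 U)
        (by change 𝟙 U ≫ u = 0; rw [hu, comp_zero])
      have hUzero : IsZero U := by
        rw [IsZero.iff_id_eq_zero, hψ, hom_shift_zero h hU hV ψ]; exact zero_comp
      have : IsIso p := (Triangle.isZero₁_iff_isIso₂ _ hUV).1 hUzero
      exact ⟨K, h.isoClosed_right (asIso p).symm hV, hK⟩

end TriangFS
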